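/- Let S be a scheme and let P, Q, G be three commutative S-group schemes with P and Q divisible. Then for all nonzero integers n and m, the endomorphism of Biext^1(P, Q; G) sending the class of a biextension B to the class of its pull-back (n × m)^*B along the map n × m : P × Q → P × Q has trivial kernel. -/

import Mathlib

/-!
Shared prelude: fppf and étale topologies on the category of `S`-schemes, commutative
group schemes as representable abelian presheaves, (commutative) extensions of abelian
fppf sheaves, biextensions, algebraic spaces, and related notions, following
C. Bertolin, "Extensions and biextensions of locally constant group schemes, tori and
abelian schemes".
-/

open CategoryTheory AlgebraicGeometry Opposite Limits

universe u

namespace FormalPaper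


/-- A morphism of schemes is flat if all its stalk maps are flat ring homomorphisms. -/
def FlatHom {X Y : Scheme.{u}} (f : X ⟶ Y) : Prop := ∀ x : X, RingHom.Flat (f.stalkMap x).hom

/-- A morphism of schemes is unramified if it is locally of finite presentation and its
diagonal is an open immersion. -/
def UnramifiedHom {X Y : Scheme.{u}} (f : X ⟶ Y) : Prop :=
  LocallyOfFinitePresentation f ∧ IsOpenImmersion (pullback.diagonal f)

/-- A family of maps is an fppf cover if each member is flat and locally of finite
presentation and the family is jointly surjective. -/
def IsFppfCover {S : Scheme.{u}} {X : Over S} (R : Presieve X) : Prop :=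
  (∀ ⦃Y : Over S⦄ (f : Y ⟶ X), R f → FlatHom f.left ∧ LocallyOfFinitePresentation f.left) ∧
  (∀ x : X.left, ∃ (Y : Over S) (f : Y ⟶ X) (_ : R f) (y : Y.left), f.left.base y = x)

/-- An étale cover: each member étale, jointly surjective. -/
def IsEtaleCover {S : Scheme.{u}} {X : Over S} (R : Presieve X) : Prop :=
  (∀ ⦃Y : Over S⦄ (f : Y ⟶ X), R f → IsEtale f.left) ∧
  (∀ x : X.left, ∃ (Y : Over S) (f : Y ⟶ X) (_ : R f) (y : Y.left), f.left.base y = x)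

/-- The fppf topology on the category of `S`-schemes: the coarsest Grothendieck topology
for which every fppf covering family generates a covering sieve. -/
def fppfTopology (S : Scheme.{u}) : GrothendieckTopology (Over S) :=
  sInf { J | ∀ (X : Over S) (R : Presieve X), IsFppfCover R → Sieve.generate R ∈ J X }

/-- The (big) étale topology on the category of `S`-schemes. -/
def etaleTopology (S : Scheme.{u}) : GrothendieckTopology (Over S) :=
  sInf { J | ∀ (X : Over S) (R : Presieve X), IsEtaleCover R → Sieve.generate R ∈ J X }

/-- A commutative `S`-group scheme, seen as a representable abelian presheaf on the
category of `S`-schemes (its functor of points, together with a representing object). -/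
structure CommGroupScheme (S : Scheme.{u}) where
  /-- The functor of points, valued in abelian groups. -/
  P : (Over S)ᵒᵖ ⥤ AddCommGrpCat.{u}
  /-- The representing `S`-scheme. -/
  X : Over S
  /-- Representability of the underlying presheaf of sets. -/
  repr : P ⋙ forget AddCommGrpCat ≅ yoneda.obj X

/-- The fibre of `f` over a point `s` of the base. -/
noncomputable def fiberOver {X S : Scheme.{u}} (f : X ⟶ S) (s : S) : Scheme.{u} :=
  pullback f (S.fromSpecResidueField s)

/-- A morphism of schemes has connected fibres. -/
def HasConnectedFibres {X S : Scheme.{u}} (f : X ⟶ S) : Prop :=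
  ∀ s : S, ConnectedSpace (fiberOver f s)

/-- An abelian `S`-scheme: a commutative group scheme which is smooth and proper over `S`
with connected fibres. -/
def IsAbelianScheme {S : Scheme.{u}} (A : CommGroupScheme S) : Prop :=
  IsSmooth A.X.hom ∧ IsProper A.X.hom ∧ HasConnectedFibres A.X.hom

/-- Restriction ("base change") of a presheaf on `S`-schemes to a presheaf on `B`-schemes
along `g : B ⟶ S`. -/
abbrev resP {S : Scheme.{u}} (P : (Over S)ᵒᵖ ⥤ AddCommGrpCat.{u}) {B : Scheme.{u}} (g : B ⟶ S) :
    (Over B)ᵒᵖ ⥤ AddCommGrpCat.{u} :=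
  (Over.map g).op ⋙ P

/-- The presheaf of locally constant `M`-valued functions, i.e. the functor of points of
the constant `B`-group scheme defined by the abelian group `M`. -/
def LCPresheaf (B : Scheme.{u}) (M : Type u) [AddCommGroup M] : (Over B)ᵒᵖ ⥤ AddCommGrpCat.{u} where
  obj T := AddCommGrpCat.of (LocallyConstant T.unop.left M)
  map {T T'} f := AddCommGrpCat.ofHom
    { toFun := LocallyConstant.comap (f.unop.left.base.hom)
      map_zero' := by ext; simp [LocallyConstant.coe_comap]
      map_add' := by intros; ext; simp [LocallyConstant.coe_comap] }
  map_id T := by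
    ext x a; first | rfl | simp [LocallyConstant.coe_comap] | (simp [LocallyConstant.coe_comap]; rfl)
  map_comp f g := by
    ext x a; first | rfl | simp [LocallyConstant.coe_comap] | (simp [LocallyConstant.coe_comap]; rfl)

/-- `X` is, locally for the étale topology on `S`, the constant group scheme defined by a
finitely generated free `ℤ`-module. -/
def IsLatticeGroupScheme {S : Scheme.{u}} (X : CommGroupScheme S) : Prop :=
  ∃ (ι : Type u) (Si : ι → Scheme.{u}) (f : ∀ i, Si i ⟶ S),
    (∀ i, IsEtale (f i)) ∧
    (∀ s : S, ∃ (i : ι) (y : Si i), (f i).base y = s) ∧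
    (∀ i, ∃ r : ℕ, Nonempty (resP X.P (f i) ≅ LCPresheaf (Si i) (Fin r → ULift.{u} ℤ)))

/-- `X` has constant geometric fibres defined by finitely generated free `ℤ`-modules. -/
def HasLatticeGeometricFibres {S : Scheme.{u}} (X : CommGroupScheme S) : Prop :=
  ∀ (K : Type u) [Field K] [IsAlgClosed K] (g : Spec (.of K) ⟶ S),
    ∃ r : ℕ, Nonempty (resP X.P g ≅ LCPresheaf (Spec (.of K)) (Fin r → ULift.{u} ℤ))

/-- The functor sending a commutative ring `R` to `(Rˣ)^r`, written additively. -/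
def unitsAdd (r : ℕ) : CommRingCat.{u} ⥤ AddCommGrpCat.{u} where
  obj R := AddCommGrpCat.of (Fin r → Additive Rˣ)
  map {R R'} f := AddCommGrpCat.ofHom (AddMonoidHom.compLeft (AddMonoidHom.mk'
      (fun x => Additive.ofMul (Units.map (f.hom : R →* R') x.toMul))
      (by intro a b; simp)) (Fin r))
  map_id R := by ext; first | rfl | simp
  map_comp f g := by ext; first | rfl | simp

/-- The functor of points of the split torus `𝔾ₘ^r` over `B`. -/
def GmPow (B : Scheme.{u}) (r : ℕ) : (Over B)ᵒᵖ ⥤ AddCommGrpCat.{u} :=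
  (Over.forget B).op ⋙ Scheme.Γ ⋙ unitsAdd r

/-- An `S`-torus: a commutative `S`-group scheme which is, locally for the étale topology
on `S`, isomorphic to a split torus `𝔾ₘ^r`. -/
def IsTorus {S : Scheme.{u}} (T : CommGroupScheme S) : Prop :=
  ∃ (ι : Type u) (Si : ι → Scheme.{u}) (f : ∀ i, Si i ⟶ S),
    (∀ i, IsEtale (f i)) ∧
    (∀ s : S, ∃ (i : ι) (y : Si i), (f i).base y = s) ∧
    (∀ i, ∃ r : ℕ, Nonempty (resP T.P (f i) ≅ GmPow (Si i) r))

/-- A (commutative) extension `0 → G → E → Q → 0` of abelian presheaves for the fppf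
topology over `B`: `i` is injective with image the kernel of `p`, and `p` is locally
surjective for the fppf topology (expressed via explicit fppf covering families). -/
structure Extension (B : Scheme.{u}) (Q G : (Over B)ᵒᵖ ⥤ AddCommGrpCat.{u}) where
  /-- The middle term. -/
  E : (Over B)ᵒᵖ ⥤ AddCommGrpCat.{u}
  /-- The inclusion of the kernel. -/
  i : G ⟶ E
  /-- The projection onto the quotient. -/
  p : E ⟶ Q
  comp_eq_zero : i ≫ p = 0
  inj : ∀ T, Function.Injective (i.app T)
  ker_sub : ∀ (T : (Over B)ᵒᵖ) (x : E.obj T), p.app T x = 0 → ∃ g, i.app T g = x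
  locSurj : ∀ (U : Over B) (q : Q.obj (op U)), ∃ R : Presieve U, IsFppfCover R ∧
    ∀ ⦃Z : Over B⦄ (f : Z ⟶ U), R f → ∃ x : E.obj (op Z), p.app (op Z) x = Q.map f.op q

namespace Extension

variable {B : Scheme.{u}} {Q G : (Over B)ᵒᵖ ⥤ AddCommGrpCat.{u}}

/-- An extension is trivial (split) if the projection admits a group-theoretic section. -/
def Splits (e : Extension B Q G) : Prop :=
  ∃ s : Q ⟶ e.E, s ≫ e.p = 𝟙 Q

/-- The restriction of the extension `e` to the base-changed situation over `g : Z ⟶ B`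
splits. -/
def SplitsOver (e : Extension B Q G) {Z : Scheme.{u}} (g : Z ⟶ B) : Prop :=
  ∃ s : resP Q g ⟶ resP e.E g, s ≫ CategoryTheory.Functor.whiskerLeft (Over.map g).op e.p = 𝟙 (resP Q g)

/-- The push-out `n_* e` of the extension `e` along multiplication by `n` on `G`,
restricted over `g : Z ⟶ B`, is trivial; equivalently, multiplication by `n` on `G`
extends to a homomorphism `E → G` over `Z`. -/
def MultSplitsOver (e : Extension B Q G) {Z : Scheme.{u}} (g : Z ⟶ B) (n : ℕ) : Prop :=
  ∃ f : resP e.E g ⟶ resP G g,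
    CategoryTheory.Functor.whiskerLeft (Over.map g).op e.i ≫ f = n • 𝟙 (resP G g)

/-- The extension `e` is (globally) of order `n`: the push-out `n_* e` of `e` along
multiplication by `n` on `G` is a trivial extension; equivalently, multiplication by `n`
on `G` extends to a homomorphism `E → G`. -/
def IsOfOrder (e : Extension B Q G) (n : ℕ) : Prop :=
  ∃ f : e.E ⟶ G, e.i ≫ f = n • 𝟙 G

/-- The extension `e` is of finite order locally over `B` for the Zariski topology. -/
def ZariskiLocallyOfFiniteOrder (e : Extension B Q G) : Prop :=
  ∀ s : B, ∃ U : B.Opens, s ∈ U ∧ ∃ n : ℕ, 0 < n ∧ e.MultSplitsOver U.ι n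

/-- The extension `e` splits locally for the fppf topology on `B`. -/
def LocallySplit (e : Extension B Q G) : Prop :=
  ∃ R : Presieve (Over.mk (𝟙 B)), IsFppfCover R ∧
    ∀ ⦃Z : Over B⦄ (f : Z ⟶ Over.mk (𝟙 B)), R f → e.SplitsOver Z.hom

/-- The middle term of the extension is representable by a scheme. -/
def RepresentableByScheme (e : Extension B Q G) : Prop :=
  ∃ W : Over B, Nonempty (e.E ⋙ forget AddCommGrpCat ≅ yoneda.obj W)

/-- There is a homomorphism of extensions `e ⟶ e'` (over the identity of `Q` and `G`)
after restriction along `g : Z ⟶ B`. -/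
def HomOver (e e' : Extension B Q G) {Z : Scheme.{u}} (g : Z ⟶ B) : Prop :=
  ∃ φ : resP e.E g ⟶ resP e'.E g,
    CategoryTheory.Functor.whiskerLeft (Over.map g).op e.i ≫ φ =
      CategoryTheory.Functor.whiskerLeft (Over.map g).op e'.i ∧
    φ ≫ CategoryTheory.Functor.whiskerLeft (Over.map g).op e'.p =
      CategoryTheory.Functor.whiskerLeft (Over.map g).op e.p

/-- Two extensions become isomorphic locally for the fppf topology on `B`. -/
def LocallyIsomorphic (e e' : Extension B Q G) : Prop :=
  ∃ R : Presieve (Over.mk (𝟙 B)), IsFppfCover R ∧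
    ∀ ⦃Z : Over B⦄ (f : Z ⟶ Over.mk (𝟙 B)), R f → e.HomOver e' Z.hom

end Extension

/-- A presheaf of abelian groups on `S`-schemes is divisible if multiplication by every
nonzero integer is an epimorphism of fppf sheaves, i.e. is locally surjective for the
fppf topology. -/
def IsDivisible {B : Scheme.{u}} (P : (Over B)ᵒᵖ ⥤ AddCommGrpCat.{u}) : Prop :=
  ∀ (n : ℤ), n ≠ 0 → ∀ (U : Over B) (x : P.obj (op U)), ∃ R : Presieve U, IsFppfCover R ∧
    ∀ ⦃Z : Over B⦄ (f : Z ⟶ U), R f → ∃ y : P.obj (op Z), n • y = P.map f.op x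

/-- A functor on `S`-schemes is an algebraic space over `S`: it is a sheaf for the étale
topology, it admits a representable étale surjective cover by a scheme, and it is
quasi-separated over `S` (the diagonal is representable by quasi-compact morphisms). -/
structure IsAlgebraicSpace (S : Scheme.{u}) (F : (Over S)ᵒᵖ ⥤ Type u) : Prop where
  isSheaf : Presheaf.IsSheaf (etaleTopology S) F
  exists_cover : ∃ (U : Over S) (π : yoneda.obj U ⟶ F),
    ∀ (T : Over S) (x : yoneda.obj T ⟶ F), ∃ (W : Over S) (a : W ⟶ U) (b : W ⟶ T),
      IsEtale b.left ∧ Surjective b.left ∧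
      IsPullback (yoneda.map a) (yoneda.map b) π x
  quasiSeparated : ∀ (T : Over S) (x y : yoneda.obj T ⟶ F),
    ∃ (W : Over S) (b : W ⟶ T) (h : yoneda.map b ≫ x = yoneda.map b ≫ y),
      QuasiCompact b.left ∧ Nonempty (IsLimit (Fork.ofι (yoneda.map b) h))

/-- Comparison isomorphism between the two ways of viewing a `T'`-scheme as an `S`-scheme. -/
def cmpIso {S : Scheme.{u}} {T T' : Over S} (f : T' ⟶ T) (U : Over T'.left) :
    (Over.map T'.hom).obj U ≅ (Over.map T.hom).obj ((Over.map f.left).obj U) :=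
  Over.isoMk (Iso.refl _) (by simp)

/-- `e'` is the restriction (base change) of the extension `e` along `f : T' ⟶ T`. -/
def ExtRestriction {S : Scheme.{u}} {Q G : (Over S)ᵒᵖ ⥤ AddCommGrpCat.{u}} {T T' : Over S}
    (f : T' ⟶ T)
    (e : Extension T.left (resP Q T.hom) (resP G T.hom))
    (e' : Extension T'.left (resP Q T'.hom) (resP G T'.hom)) : Prop :=
  ∃ θ : ∀ U : (Over T'.left)ᵒᵖ, e'.E.obj U → e.E.obj ((Over.map f.left).op.obj U),
    (∀ U, Function.Bijective (θ U)) ∧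
    (∀ (U : (Over T'.left)ᵒᵖ) (x y : e'.E.obj U), θ U (x + y) = θ U x + θ U y) ∧
    (∀ {U V : (Over T'.left)ᵒᵖ} (g : U ⟶ V) (x : e'.E.obj U),
      θ V (e'.E.map g x) = e.E.map ((Over.map f.left).op.map g) (θ U x)) ∧
    (∀ (U : (Over T'.left)ᵒᵖ) (gg : (resP G T'.hom).obj U),
      θ U (e'.i.app U gg) = e.i.app _ (G.map ((cmpIso f U.unop).inv.op) gg)) ∧
    (∀ (U : (Over T'.left)ᵒᵖ) (x : e'.E.obj U),
      e.p.app _ (θ U x) = Q.map ((cmpIso f U.unop).inv.op) (e'.p.app U x))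

/-- `F` is the fppf sheaf `uExt¹(Q, G)` associated to the presheaf of isomorphism classes
of extensions of `Q` by `G`: there is a classifying map `cl`, compatible with restriction,
which is locally injective and locally surjective, and `F` is a sheaf. -/
structure IsExtensionSheafification (S : Scheme.{u}) (Q G : (Over S)ᵒᵖ ⥤ AddCommGrpCat.{u})
    (F : (Over S)ᵒᵖ ⥤ AddCommGrpCat.{u}) where
  isSheaf : Presheaf.IsSheaf (fppfTopology S) F
  cl : ∀ T : Over S, Extension T.left (resP Q T.hom) (resP G T.hom) → F.obj (op T)
  cl_zero_of_splits : ∀ T e, Extension.Splits e → cl T e = 0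
  locallySplit_of_cl_zero : ∀ T e, cl T e = 0 → Extension.LocallySplit e
  compat : ∀ (T T' : Over S) (f : T' ⟶ T) e e', ExtRestriction f e e' →
    cl T' e' = F.map f.op (cl T e)
  locInj : ∀ (T : Over S) e e', cl T e = cl T e' → Extension.LocallyIsomorphic e e'
  locSurj : ∀ (T : Over S) (x : F.obj (op T)), ∃ R : Presieve T, IsFppfCover R ∧
    ∀ ⦃Z : Over S⦄ (f : Z ⟶ T), R f →
      ∃ e : Extension Z.left (resP Q Z.hom) (resP G Z.hom), cl Z e = F.map f.op x

/-- Comparison isomorphism used to restrict homomorphisms of restricted presheaves. -/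
def cmpIso' {S B' B'' : Scheme.{u}} (h : B'' ⟶ B') (g : B' ⟶ S) (U : Over B'') :
    (Over.map (h ≫ g)).obj U ≅ (Over.map g).obj ((Over.map h).obj U) :=
  Over.isoMk (Iso.refl _) (by simp)

/-- `f'` is the restriction of the homomorphism `f` along `h : B'' ⟶ B'`. -/
def HomRestriction {S : Scheme.{u}} {A Bp : (Over S)ᵒᵖ ⥤ AddCommGrpCat.{u}}
    {B' B'' : Scheme.{u}} (h : B'' ⟶ B') (g : B' ⟶ S)
    (f : resP A g ⟶ resP Bp g) (f' : resP A (h ≫ g) ⟶ resP Bp (h ≫ g)) : Prop :=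
  ∀ (U : (Over B'')ᵒᵖ) (a : A.obj ((Over.map (h ≫ g)).op.obj U)),
    Bp.map ((cmpIso' h g U.unop).inv.op) (f'.app U a) =
      f.app ((Over.map h).op.obj U) (A.map ((cmpIso' h g U.unop).inv.op) a)
/-- A biextension of `(P, Q)` by `G` in the topos of fppf sheaves over `S` (SGA7 VII 2.1):
a `G`-torsor `B` over `P × Q` together with two compatible partial composition laws making
it an extension of `Q_P` by `G_P` and of `P_Q` by `G_Q`. -/
structure Biextension (S : Scheme.{u}) (P Q G : (Over S)ᵒᵖ ⥤ AddCommGrpCat.{u}) where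
  B : (Over S)ᵒᵖ ⥤ Type u
  isSheaf : Presheaf.IsSheaf (fppfTopology S) B
  p : ∀ T : (Over S)ᵒᵖ, B.obj T → P.obj T
  p_natural : ∀ {T T'} (f : T ⟶ T') (b : B.obj T), p T' (B.map f b) = P.map f (p T b)
  q : ∀ T : (Over S)ᵒᵖ, B.obj T → Q.obj T
  q_natural : ∀ {T T'} (f : T ⟶ T') (b : B.obj T), q T' (B.map f b) = Q.map f (q T b)
  act : ∀ T : (Over S)ᵒᵖ, G.obj T → B.obj T → B.obj T
  act_p : ∀ T g b, p T (act T g b) = p T b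
  act_q : ∀ T g b, q T (act T g b) = q T b
  act_zero : ∀ T b, act T 0 b = b
  act_add : ∀ T g g' b, act T (g + g') b = act T g (act T g' b)
  act_natural : ∀ {T T'} (f : T ⟶ T') (g : G.obj T) (b : B.obj T),
    B.map f (act T g b) = act T' (G.map f g) (B.map f b)
  act_free : ∀ T (g : G.obj T) b, act T g b = b → g = 0
  act_trans : ∀ T (b b' : B.obj T), p T b = p T b' → q T b = q T b' → ∃ g, act T g b = b'
  loc_nonempty : ∀ (T : Over S) (x : P.obj (op T)) (y : Q.obj (op T)),
    ∃ R : Presieve T, IsFppfCover R ∧ ∀ ⦃Z : Over S⦄ (f : Z ⟶ T), R f →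
      ∃ b : B.obj (op Z), p (op Z) b = P.map f.op x ∧ q (op Z) b = Q.map f.op y
  /-- first partial composition law: addition of points lying over the same point of `Q` -/
  add₁ : ∀ (T : (Over S)ᵒᵖ) (b b' : B.obj T), q T b = q T b' → B.obj T
  add₁_p : ∀ T b b' h, p T (add₁ T b b' h) = p T b + p T b'
  add₁_q : ∀ T b b' h, q T (add₁ T b b' h) = q T b
  add₁_natural : ∀ {T T'} (f : T ⟶ T') b b' h h',
    B.map f (add₁ T b b' h) = add₁ T' (B.map f b) (B.map f b') h'
  add₁_comm : ∀ T b b' h h', add₁ T b b' h = add₁ T b' b h'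
  add₁_assoc : ∀ T b b' b'' h₁ h₂ h₃ h₄,
    add₁ T (add₁ T b b' h₁) b'' h₂ = add₁ T b (add₁ T b' b'' h₃) h₄
  add₁_act : ∀ T g b b' h h', add₁ T (act T g b) b' h' = act T g (add₁ T b b' h)
  /-- second partial composition law: addition of points lying over the same point of `P` -/
  add₂ : ∀ (T : (Over S)ᵒᵖ) (b b' : B.obj T), p T b = p T b' → B.obj T
  add₂_p : ∀ T b b' h, p T (add₂ T b b' h) = p T b
  add₂_q : ∀ T b b' h, q T (add₂ T b b' h) = q T b + q T b'
  add₂_natural : ∀ {T T'} (f : T ⟶ T') b b' h h',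
    B.map f (add₂ T b b' h) = add₂ T' (B.map f b) (B.map f b') h'
  add₂_comm : ∀ T b b' h h', add₂ T b b' h = add₂ T b' b h'
  add₂_assoc : ∀ T b b' b'' h₁ h₂ h₃ h₄,
    add₂ T (add₂ T b b' h₁) b'' h₂ = add₂ T b (add₂ T b' b'' h₃) h₄
  add₂_act : ∀ T g b b' h h', add₂ T (act T g b) b' h' = act T g (add₂ T b b' h)
  /-- compatibility between the two partial composition laws -/
  interchange : ∀ (T : (Over S)ᵒᵖ) (b₁ b₂ b₃ b₄ : B.obj T)
    (h₁₂ : q T b₁ = q T b₂) (h₃₄ : q T b₃ = q T b₄)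
    (h₁₃ : p T b₁ = p T b₃) (h₂₄ : p T b₂ = p T b₄) (k₁ k₂),
    add₂ T (add₁ T b₁ b₂ h₁₂) (add₁ T b₃ b₄ h₃₄) k₁ =
      add₁ T (add₂ T b₁ b₃ h₁₃) (add₂ T b₂ b₄ h₂₄) k₂

namespace Biextension

variable {S : Scheme.{u}} {P Q G : (Over S)ᵒᵖ ⥤ AddCommGrpCat.{u}}

/-- A trivialization of a biextension: a global bi-additive section. -/
structure Trivialization (b : Biextension S P Q G) where
  s : ∀ T : (Over S)ᵒᵖ, P.obj T → Q.obj T → b.B.obj T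
  natural : ∀ {T T'} (f : T ⟶ T') x y, b.B.map f (s T x y) = s T' (P.map f x) (Q.map f y)
  p_s : ∀ T x y, b.p T (s T x y) = x
  q_s : ∀ T x y, b.q T (s T x y) = y
  add_left : ∀ T x x' y h, s T (x + x') y = b.add₁ T (s T x y) (s T x' y) h
  add_right : ∀ T x y y' h, s T x (y + y') = b.add₂ T (s T x y) (s T x y') h

/-- A biextension is trivial if it admits a bi-additive section. -/
def IsTrivial (b : Biextension S P Q G) : Prop := Nonempty b.Trivialization

/-- A trivialization of the pull-back `(n × m)^* b` of `b` along multiplication by `n` on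
`P` and by `m` on `Q`: a bi-additive natural family of points of `b` lying over
`(n • x, m • y)`. -/
structure MulTrivialization (n m : ℤ) (b : Biextension S P Q G) where
  s : ∀ T : (Over S)ᵒᵖ, P.obj T → Q.obj T → b.B.obj T
  natural : ∀ {T T'} (f : T ⟶ T') x y, b.B.map f (s T x y) = s T' (P.map f x) (Q.map f y)
  p_s : ∀ T x y, b.p T (s T x y) = n • x
  q_s : ∀ T x y, b.q T (s T x y) = m • y
  add_left : ∀ T x x' y h, s T (x + x') y = b.add₁ T (s T x y) (s T x' y) h
  add_right : ∀ T x y y' h, s T x (y + y') = b.add₂ T (s T x y) (s T x y') h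

/-- A morphism from a biextension to itself, over the identity of `P`, `Q` and `G`. -/
structure Endo (b : Biextension S P Q G) where
  φ : ∀ T, b.B.obj T → b.B.obj T
  natural : ∀ {T T'} (f : T ⟶ T') x, b.B.map f (φ T x) = φ T' (b.B.map f x)
  map_p : ∀ T x, b.p T (φ T x) = b.p T x
  map_q : ∀ T x, b.q T (φ T x) = b.q T x
  map_act : ∀ T g x, φ T (b.act T g x) = b.act T g (φ T x)
  map_add₁ : ∀ T x y h h', φ T (b.add₁ T x y h) = b.add₁ T (φ T x) (φ T y) h'
  map_add₂ : ∀ T x y h h', φ T (b.add₂ T x y h) = b.add₂ T (φ T x) (φ T y) h'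

/-- The category of biextensions of `(P,Q)` by `G` is trivial: every biextension is
trivial and admits no nontrivial automorphism. -/
def TrivialCategory (S : Scheme.{u}) (P Q G : (Over S)ᵒᵖ ⥤ AddCommGrpCat.{u}) : Prop :=
  (∀ b : Biextension S P Q G, b.IsTrivial) ∧
  (∀ (b : Biextension S P Q G) (ψ : b.Endo) (T : (Over S)ᵒᵖ) (x : b.B.obj T), ψ.φ T x = x)

end Biextension



section AuxDescent



lemma flat_localHom_injective {R S : Type u} [CommRing R] [CommRing S]
    [IsLocalRing R] [IsLocalRing S] (f : R →+* S) (hf : RingHom.Flat f)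
    [IsLocalHom f] : Function.Injective f := by
  letI := f.toAlgebra
  haveI : Module.Flat R S := hf
  haveI : IsLocalHom (algebraMap R S) := ‹IsLocalHom f›
  haveI : Module.FaithfullyFlat R S := Module.FaithfullyFlat.of_flat_of_isLocalHom
  exact FaithfulSMul.algebraMap_injective R S

lemma scheme_hom_ext_of_flat_cover {T X : Scheme.{u}} (a b : T ⟶ X)
    (H : ∀ t : T, ∃ (Z : Scheme.{u}) (f : Z ⟶ T) (z : Z),
      (∀ w : Z, RingHom.Flat (f.stalkMap w).hom) ∧ f ≫ a = f ≫ b ∧ f.base z = t) :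
    a = b := by
  have hbase : a.base = b.base := by
    apply TopCat.ext
    intro t
    obtain ⟨Z, f, z, -, hc, rfl⟩ := H t
    have := congrArg (fun (g : Z ⟶ X) => g.base z) hc
    simpa using this
  have key : ∀ (U : X.Opens) (s : Γ(X, U)) (t : T) (ht : a.base t ∈ U) (ht' : b.base t ∈ U),
      T.presheaf.germ (a ⁻¹ᵁ U) t ht (a.app U s) = T.presheaf.germ (b ⁻¹ᵁ U) t ht' (b.app U s) := by
    intro U s t ht ht'
    obtain ⟨Z, f, z, hflat, hc, rfl⟩ := H t
    rw [← Scheme.Hom.germ_stalkMap_apply, ← Scheme.Hom.germ_stalkMap_apply]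
    apply flat_localHom_injective (f.stalkMap z).hom (hflat z)
    show (a.stalkMap (f.base z) ≫ f.stalkMap z) (X.presheaf.germ U (a.base (f.base z)) ht s) =
      (b.stalkMap (f.base z) ≫ f.stalkMap z) (X.presheaf.germ U (b.base (f.base z)) ht' s)
    rw [← Scheme.Hom.stalkMap_comp, ← Scheme.Hom.stalkMap_comp]
    revert ht ht'
    show ∀ (ht : (f ≫ a).base z ∈ U) (ht' : (f ≫ b).base z ∈ U),
      ((f ≫ a).stalkMap z) (X.presheaf.germ U ((f ≫ a).base z) ht s) =
      ((f ≫ b).stalkMap z) (X.presheaf.germ U ((f ≫ b).base z) ht' s)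
    have hgen : ∀ (w : Z ⟶ X) (_ : w = f ≫ b) (ht : w.base z ∈ U) (ht' : (f ≫ b).base z ∈ U),
        (w.stalkMap z) (X.presheaf.germ U (w.base z) ht s) =
        ((f ≫ b).stalkMap z) (X.presheaf.germ U ((f ≫ b).base z) ht' s) := by
      rintro w rfl ht ht'
      rfl
    exact hgen (f ≫ a) hc
  apply Scheme.Hom.ext hbase
  intro U
  ext s
  show (T.presheaf.map _) (a.app U s) = b.app U s
  apply TopCat.Presheaf.section_ext T.sheaf (b ⁻¹ᵁ U)
  intro t ht
  have hta : a.base t ∈ U := by rw [hbase]; exact ht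
  have : T.presheaf.germ (b ⁻¹ᵁ U) t ht ((T.presheaf.map (eqToHom
      congr((TopologicalSpace.Opens.map $hbase.symm).obj U)).op) (a.app U s)) =
      T.presheaf.germ (a ⁻¹ᵁ U) t hta (a.app U s) := by
    rw [TopCat.Presheaf.germ_res_apply]
  exact this.trans (key U s t hta ht)


variable {S : Scheme.{u}}

lemma flatHom_comp {X Y Z : Scheme.{u}} {f : X ⟶ Y} {g : Y ⟶ Z}
    (hf : FlatHom f) (hg : FlatHom g) : FlatHom (f ≫ g) := by
  intro x
  rw [Scheme.Hom.stalkMap_comp]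
  haveI := hf x
  haveI := hg (f.base x)
  show RingHom.Flat ((f.stalkMap x).hom.comp (g.stalkMap (f.base x)).hom)
  exact RingHom.Flat.comp (hg (f.base x)) (hf x)

/-- A sieve containing an fppf cover. -/
def CoverIn {U : Over S} (Sv : Sieve U) : Prop :=
  ∃ R : Presieve U, IsFppfCover R ∧ ∀ ⦃Z⦄ (f : Z ⟶ U), R f → Sv f

lemma generate_mem_fppf {X : Over S} {R : Presieve X} (h : IsFppfCover R) :
    Sieve.generate R ∈ fppfTopology S X := by
  rw [fppfTopology, GrothendieckTopology.mem_sInf]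
  intro J hJ
  exact hJ X R h

lemma CoverIn.mem_fppf {U : Over S} {Sv : Sieve U} (h : CoverIn Sv) :
    Sv ∈ fppfTopology S U := by
  obtain ⟨R, hR, hle⟩ := h
  exact (fppfTopology S).superset_covering
    ((Sieve.generate_le_iff R Sv).2 hle) (generate_mem_fppf hR)

lemma coverIn_bind {U : Over S} (Sv : Sieve U) (R₁ : Presieve U) (h₁ : IsFppfCover R₁)
    (H : ∀ (Z : Over S) (f : Z ⟶ U), R₁ f → ∃ R₂ : Presieve Z, IsFppfCover R₂ ∧
      ∀ ⦃W⦄ (k : W ⟶ Z), R₂ k → Sv (k ≫ f)) : CoverIn Sv := by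
  choose R₂ hfppf hsv using H
  refine ⟨fun W g => ∃ (Z : Over S) (f : Z ⟶ U) (hf : R₁ f) (k : W ⟶ Z),
    R₂ Z f hf k ∧ g = k ≫ f, ⟨?_, ?_⟩, ?_⟩
  · rintro Y g ⟨Z, f, hf, k, hk, rfl⟩
    have h1 := (h₁.1 f hf)
    have h2 := ((hfppf Z f hf).1 k hk)
    rw [Over.comp_left]
    haveI := h1.2
    haveI := h2.2
    exact ⟨flatHom_comp h2.1 h1.1, inferInstance⟩
  · intro x
    obtain ⟨Z, f, hf, z, hz⟩ := h₁.2 x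
    obtain ⟨W, k, hk, w, hw⟩ := (hfppf Z f hf).2 z
    refine ⟨W, k ≫ f, ⟨Z, f, hf, k, hk, rfl⟩, w, ?_⟩
    rw [Over.comp_left]
    show f.left.base (k.left.base w) = x
    rw [hw, hz]
  · rintro Y g ⟨Z, f, hf, k, hk, rfl⟩
    exact hsv Z f hf k hk

/-- Separatedness of representable presheaves with respect to sieves containing an
fppf cover. -/
lemma repSep {X0 : Over S} {F : (Over S)ᵒᵖ ⥤ AddCommGrpCat.{u}}
    (e : F ⋙ forget AddCommGrpCat ≅ yoneda.obj X0) {T : Over S}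
    (x y : F.obj (op T)) (R : Presieve T) (hR : IsFppfCover R)
    (h : ∀ ⦃Z⦄ (f : Z ⟶ T), R f → F.map f.op x = F.map f.op y) : x = y := by
  set gx : T ⟶ X0 := e.hom.app (op T) x with hgx
  set gy : T ⟶ X0 := e.hom.app (op T) y with hgy
  have hcomp : ∀ ⦃Z⦄ (f : Z ⟶ T), R f → f ≫ gx = f ≫ gy := by
    intro Z f hf
    have n1 := NatTrans.naturality_apply e.hom f.op x
    have n2 := NatTrans.naturality_apply e.hom f.op y
    show (yoneda.obj X0).map f.op (e.hom.app (op T) x) =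
      (yoneda.obj X0).map f.op (e.hom.app (op T) y)
    rw [← n1, ← n2]
    exact congrArg (e.hom.app (op Z)) (h f hf)
  have : gx.left = gy.left := by
    apply scheme_hom_ext_of_flat_cover
    intro t
    obtain ⟨Z, f, hf, z, hz⟩ := hR.2 t
    refine ⟨Z.left, f.left, z, (hR.1 f hf).1, ?_, hz⟩
    have := congrArg CommaMorphism.left (hcomp f hf)
    simpa using this
  have hg : gx = gy := Over.OverMorphism.ext this
  have hinj := fun x => Iso.hom_inv_id_app_apply e (op T) x
  calc x = e.inv.app (op T) (e.hom.app (op T) x) := (hinj x).symm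
  _ = e.inv.app (op T) (e.hom.app (op T) y) := by rw [← hgx, ← hgy, hg]
  _ = y := hinj y

end AuxDescent

section BiextAlgebra

variable {S : Scheme.{u}} {P Q G : (Over S)ᵒᵖ ⥤ AddCommGrpCat.{u}} {b : Biextension S P Q G}

lemma act_cancel {T} (g g' : G.obj T) (w : b.B.obj T)
    (h : b.act T g w = b.act T g' w) : g = g' := by
  have h1 : b.act T (-g' + g) w = b.act T (-g' + g') w := by
    rw [b.act_add, b.act_add, h]
  rw [neg_add_cancel, b.act_zero] at h1
  have h2 := b.act_free T (-g' + g) w h1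
  calc g = g' + (-g' + g) := by abel
  _ = g' := by rw [h2, add_zero]

lemma add₁_congr {T} {A A' B B' : b.B.obj T} (e1 : A = A') (e2 : B = B') (h h') :
    b.add₁ T A B h = b.add₁ T A' B' h' := by subst e1; subst e2; rfl

lemma add₂_congr {T} {A A' B B' : b.B.obj T} (e1 : A = A') (e2 : B = B') (h h') :
    b.add₂ T A B h = b.add₂ T A' B' h' := by subst e1; subst e2; rfl

lemma act_add₁_left {T} (g : G.obj T) (A B : b.B.obj T) (h h') :
    b.act T g (b.add₁ T A B h) = b.add₁ T (b.act T g A) B h' :=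
  (b.add₁_act T g A B h h').symm

lemma act_add₁_right {T} (g : G.obj T) (A B : b.B.obj T) (h h') :
    b.act T g (b.add₁ T A B h) = b.add₁ T A (b.act T g B) h' := by
  have e1 : b.add₁ T A B h = b.add₁ T B A (h.symm) := b.add₁_comm T A B h h.symm
  rw [e1, act_add₁_left g B A h.symm (by rw [b.act_q]; exact h.symm)]
  exact b.add₁_comm T _ _ _ _

lemma act_add₂_left {T} (g : G.obj T) (A B : b.B.obj T) (h h') :
    b.act T g (b.add₂ T A B h) = b.add₂ T (b.act T g A) B h' :=
  (b.add₂_act T g A B h h').symm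

lemma act_add₂_right {T} (g : G.obj T) (A B : b.B.obj T) (h h') :
    b.act T g (b.add₂ T A B h) = b.add₂ T A (b.act T g B) h' := by
  have e1 : b.add₂ T A B h = b.add₂ T B A (h.symm) := b.add₂_comm T A B h h.symm
  rw [e1, act_add₂_left g B A h.symm (by rw [b.act_p]; exact h.symm)]
  exact b.add₂_comm T _ _ _ _

lemma cancel₁ {T} {w w' u : b.B.obj T} {h h'}
    (e : b.add₁ T w u h = b.add₁ T w' u h') : w = w' := by
  have hp : b.p T w' = b.p T w := by
    have := congrArg (b.p T) e
    rw [b.add₁_p, b.add₁_p] at this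
    exact (add_right_cancel this).symm
  have hq : b.q T w' = b.q T w := h'.trans h.symm
  obtain ⟨g, hg⟩ := b.act_trans T w' w hp hq
  have e2 : b.add₁ T (b.act T g w') u (by rw [b.act_q]; exact h') =
      b.act T g (b.add₁ T w' u h') := b.add₁_act T g w' u h' _
  have e3 : b.add₁ T w u h = b.act T g (b.add₁ T w' u h') := by
    rw [← e2]; exact add₁_congr hg.symm rfl _ _
  rw [← e] at e3
  have : g = 0 := by
    have := act_cancel g 0 (b.add₁ T w u h) (by rw [b.act_zero]; exact e3.symm)
    exact this
  rw [this, b.act_zero] at hg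
  exact hg.symm

lemma cancel₂ {T} {w w' u : b.B.obj T} {h h'}
    (e : b.add₂ T w u h = b.add₂ T w' u h') : w = w' := by
  have hq : b.q T w' = b.q T w := by
    have := congrArg (b.q T) e
    rw [b.add₂_q, b.add₂_q] at this
    exact (add_right_cancel this).symm
  have hp : b.p T w' = b.p T w := h'.trans h.symm
  obtain ⟨g, hg⟩ := b.act_trans T w' w hp hq
  have e2 : b.add₂ T (b.act T g w') u (by rw [b.act_p]; exact h') =
      b.act T g (b.add₂ T w' u h') := b.add₂_act T g w' u h' _
  have e3 : b.add₂ T w u h = b.act T g (b.add₂ T w' u h') := by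
    rw [← e2]; exact add₂_congr hg.symm rfl _ _
  rw [← e] at e3
  have : g = 0 := act_cancel g 0 (b.add₂ T w u h) (by rw [b.act_zero]; exact e3.symm)
  rw [this, b.act_zero] at hg
  exact hg.symm

variable {n m : ℤ} (t : Biextension.MulTrivialization n m b)

lemma sect_translate₁ {T} (g : G.obj T) (x₁ x₂ : P.obj T) (y : Q.obj T)
    (E : b.act T g (t.s T x₂ y) = t.s T x₁ y) (z : P.obj T) :
    b.act T g (t.s T (z + x₂) y) = t.s T (z + x₁) y := by
  rw [t.add_left T z x₂ y (by simp only [t.q_s])]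
  rw [act_add₁_right g _ _ (by simp only [t.q_s]) (by simp only [b.act_q, t.q_s])]
  rw [add₁_congr rfl E (by simp only [b.act_q, t.q_s]) (by simp only [t.q_s])]
  exact (t.add_left T z x₁ y _).symm

lemma sect_translate₂ {T} (g : G.obj T) (y₁ y₂ : Q.obj T) (x : P.obj T)
    (E : b.act T g (t.s T x y₂) = t.s T x y₁) (z : Q.obj T) :
    b.act T g (t.s T x (z + y₂)) = t.s T x (z + y₁) := by
  rw [t.add_right T x z y₂ (by simp only [t.p_s])]
  rw [act_add₂_right g _ _ (by simp only [t.p_s]) (by simp only [b.act_p, t.p_s])]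
  rw [add₂_congr rfl E (by simp only [b.act_p, t.p_s]) (by simp only [t.p_s])]
  exact (t.add_right T x z y₁ _).symm

lemma zero_col {T} (x₁ x₂ : P.obj T) (hx : n • x₁ = n • x₂) :
    t.s T x₁ 0 = t.s T x₂ 0 := by
  obtain ⟨d, hd⟩ := b.act_trans T (t.s T x₂ 0) (t.s T x₁ 0)
    (by simp only [t.p_s]; exact hx.symm) (by simp only [t.q_s])
  have double : ∀ x : P.obj T, t.s T x 0 = b.add₂ T (t.s T x 0) (t.s T x 0)
      (by simp only [t.p_s]) := by
    intro x
    have := t.add_right T x 0 0 (by simp only [t.p_s])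
    rw [add_zero] at this
    exact this
  have e1 : t.s T x₁ 0 = b.act T (d + d) (t.s T x₂ 0) := by
    calc t.s T x₁ 0
        = b.add₂ T (t.s T x₁ 0) (t.s T x₁ 0) (by simp only [t.p_s]) := double x₁
      _ = b.add₂ T (b.act T d (t.s T x₂ 0)) (b.act T d (t.s T x₂ 0))
          (by simp only [b.act_p]) := add₂_congr hd.symm hd.symm _ _
      _ = b.act T d (b.add₂ T (t.s T x₂ 0) (b.act T d (t.s T x₂ 0))
          (by simp only [b.act_p, t.p_s])) := (act_add₂_left d _ _ _ _).symm
      _ = b.act T d (b.act T d (b.add₂ T (t.s T x₂ 0) (t.s T x₂ 0)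
          (by simp only [t.p_s]))) := congrArg (b.act T d) (act_add₂_right d _ _ _ _).symm
      _ = b.act T d (b.act T d (t.s T x₂ 0)) :=
          congrArg (fun w => b.act T d (b.act T d w)) (double x₂).symm
      _ = b.act T (d + d) (t.s T x₂ 0) := (b.act_add T d d _).symm
  have hdd : d + d = d := act_cancel _ _ _ (e1.symm.trans hd.symm)
  have hd0 : d = 0 := add_eq_left.mp hdd
  rw [hd0, b.act_zero] at hd
  exact hd.symm

lemma zero_row {T} (y₁ y₂ : Q.obj T) (hy : m • y₁ = m • y₂) :
    t.s T 0 y₁ = t.s T 0 y₂ := by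
  obtain ⟨d, hd⟩ := b.act_trans T (t.s T 0 y₂) (t.s T 0 y₁)
    (by simp only [t.p_s]) (by simp only [t.q_s]; exact hy.symm)
  have double : ∀ y : Q.obj T, t.s T 0 y = b.add₁ T (t.s T 0 y) (t.s T 0 y)
      (by simp only [t.q_s]) := by
    intro y
    have := t.add_left T 0 0 y (by simp only [t.q_s])
    rw [add_zero] at this
    exact this
  have e1 : t.s T 0 y₁ = b.act T (d + d) (t.s T 0 y₂) := by
    calc t.s T 0 y₁
        = b.add₁ T (t.s T 0 y₁) (t.s T 0 y₁) (by simp only [t.q_s]) := double y₁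
      _ = b.add₁ T (b.act T d (t.s T 0 y₂)) (b.act T d (t.s T 0 y₂))
          (by simp only [b.act_q]) := add₁_congr hd.symm hd.symm _ _
      _ = b.act T d (b.add₁ T (t.s T 0 y₂) (b.act T d (t.s T 0 y₂))
          (by simp only [b.act_q, t.q_s])) := (act_add₁_left d _ _ _ _).symm
      _ = b.act T d (b.act T d (b.add₁ T (t.s T 0 y₂) (t.s T 0 y₂)
          (by simp only [t.q_s]))) := congrArg (b.act T d) (act_add₁_right d _ _ _ _).symm
      _ = b.act T d (b.act T d (t.s T 0 y₂)) :=
          congrArg (fun w => b.act T d (b.act T d w)) (double y₂).symm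
      _ = b.act T (d + d) (t.s T 0 y₂) := (b.act_add T d d _).symm
  have hdd : d + d = d := act_cancel _ _ _ (e1.symm.trans hd.symm)
  have hd0 : d = 0 := add_eq_left.mp hdd
  rw [hd0, b.act_zero] at hd
  exact hd.symm

lemma slot1 {T} (x₁ x₂ : P.obj T) (u : Q.obj T) (hx : n • x₁ = n • x₂) :
    t.s T x₁ (n • u) = t.s T x₂ (n • u) := by
  have hna : n • (x₁ - x₂) = 0 := by rw [smul_sub, hx, sub_self]
  obtain ⟨g, hg⟩ := b.act_trans T (t.s T x₂ u) (t.s T (x₂ + (x₁ - x₂)) u)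
    (by simp only [t.p_s]; rw [smul_add, hna, add_zero]) (by simp only [t.q_s])
  set a := x₁ - x₂ with ha
  have Eneg : b.act T (-g) (t.s T (x₂ + a) u) = t.s T x₂ u := by
    rw [← hg, ← b.act_add, neg_add_cancel, b.act_zero]
  have stage1 : ∀ j : ℤ, b.act T (j • g) (t.s T x₂ u) = t.s T (x₂ + j • a) u := by
    intro j
    induction j using Int.induction_on with
    | zero => rw [zero_smul, zero_smul, b.act_zero, add_zero]
    | succ i ih =>
        have dec : ((i : ℤ) + 1) • g = g + (i : ℤ) • g := by
          rw [add_smul, one_smul, add_comm]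
        rw [dec, b.act_add, ih]
        have trans := sect_translate₁ t g (x₂ + a) x₂ u hg ((i : ℤ) • a)
        rw [add_comm x₂ ((i : ℤ) • a), trans]
        congr 1
        rw [add_smul, one_smul]
        abel
    | pred i ih =>
        have dec : (-(i : ℤ) - 1) • g = -g + (-(i : ℤ)) • g := by
          rw [sub_smul, one_smul]
          abel
        rw [dec, b.act_add, ih]
        have harg : x₂ + (-(i : ℤ)) • a = (-(i : ℤ) - 1) • a + (x₂ + a) := by
          rw [sub_smul, one_smul]
          abel
        rw [harg, sect_translate₁ t (-g) x₂ (x₂ + a) u Eneg ((-(i : ℤ) - 1) • a)]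
        congr 1
        abel
  have hng : n • g = 0 := by
    have h1 := stage1 n
    rw [hna, add_zero] at h1
    exact b.act_free T _ _ h1
  have pfW : ∀ j : ℤ, b.p T (b.act T (j • g) (t.s T x₂ (j • u))) = b.p T (t.s T (x₂ + a) u) := by
    intro j
    simp only [b.act_p, t.p_s]
    rw [smul_add, hna, add_zero]
  have pfV : ∀ j : ℤ, b.p T (t.s T (x₂ + a) (j • u)) = b.p T (t.s T (x₂ + a) u) := by
    intro j
    simp only [t.p_s]
  have hW : ∀ j : ℤ, b.add₂ T (b.act T (j • g) (t.s T x₂ (j • u))) (t.s T (x₂ + a) u) (pfW j)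
      = b.act T ((j + 1) • g) (t.s T x₂ ((j + 1) • u)) := by
    intro j
    calc b.add₂ T (b.act T (j • g) (t.s T x₂ (j • u))) (t.s T (x₂ + a) u) (pfW j)
        = b.add₂ T (b.act T (j • g) (t.s T x₂ (j • u))) (b.act T g (t.s T x₂ u))
          (by simp only [b.act_p, t.p_s]) := add₂_congr rfl hg.symm _ _
      _ = b.act T (j • g) (b.add₂ T (t.s T x₂ (j • u)) (b.act T g (t.s T x₂ u))
          (by simp only [b.act_p, t.p_s])) := (act_add₂_left _ _ _ _ _).symm
      _ = b.act T (j • g) (b.act T g (b.add₂ T (t.s T x₂ (j • u)) (t.s T x₂ u)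
          (by simp only [t.p_s]))) := congrArg _ (act_add₂_right _ _ _ _ _).symm
      _ = b.act T (j • g + g) (b.add₂ T (t.s T x₂ (j • u)) (t.s T x₂ u)
          (by simp only [t.p_s])) := (b.act_add T _ _ _).symm
      _ = b.act T ((j + 1) • g) (t.s T x₂ ((j + 1) • u)) := by
          rw [add_smul, one_smul, add_smul, one_smul]
          exact congrArg _ (t.add_right T x₂ _ _ _).symm
  have hV : ∀ j : ℤ, b.add₂ T (t.s T (x₂ + a) (j • u)) (t.s T (x₂ + a) u) (pfV j)
      = t.s T (x₂ + a) ((j + 1) • u) := by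
    intro j
    rw [add_smul, one_smul]
    exact (t.add_right T (x₂ + a) _ _ _).symm
  have stage2 : ∀ j : ℤ, b.act T (j • g) (t.s T x₂ (j • u)) = t.s T (x₂ + a) (j • u) := by
    intro j
    induction j using Int.induction_on with
    | zero =>
        simp only [zero_smul, b.act_zero]
        exact zero_col t x₂ (x₂ + a) (by rw [smul_add, hna, add_zero])
    | succ i ih =>
        exact (hW i).symm.trans ((add₂_congr ih rfl (pfW i) (pfV i)).trans (hV i))
    | pred i ih =>
        have h1 := hW (-(i : ℤ) - 1)
        have h2 := hV (-(i : ℤ) - 1)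
        have e : (-(i : ℤ) - 1) + 1 = -(i : ℤ) := by ring
        rw [e] at h1 h2
        exact cancel₂ (h1.trans (ih.trans h2.symm))
  have final := stage2 n
  rw [hng, b.act_zero] at final
  rw [final]
  congr 1
  rw [ha]
  abel

lemma slot2 {T} (y₁ y₂ : Q.obj T) (v : P.obj T) (hy : m • y₁ = m • y₂) :
    t.s T (m • v) y₁ = t.s T (m • v) y₂ := by
  have hmc : m • (y₁ - y₂) = 0 := by rw [smul_sub, hy, sub_self]
  obtain ⟨g, hg⟩ := b.act_trans T (t.s T v y₂) (t.s T v (y₂ + (y₁ - y₂)))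
    (by simp only [t.p_s]) (by simp only [t.q_s]; rw [smul_add, hmc, add_zero])
  set c := y₁ - y₂ with hc
  have Eneg : b.act T (-g) (t.s T v (y₂ + c)) = t.s T v y₂ := by
    rw [← hg, ← b.act_add, neg_add_cancel, b.act_zero]
  have stage1 : ∀ j : ℤ, b.act T (j • g) (t.s T v y₂) = t.s T v (y₂ + j • c) := by
    intro j
    induction j using Int.induction_on with
    | zero => rw [zero_smul, zero_smul, b.act_zero, add_zero]
    | succ i ih =>
        have dec : ((i : ℤ) + 1) • g = g + (i : ℤ) • g := by
          rw [add_smul, one_smul, add_comm]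
        rw [dec, b.act_add, ih]
        have trans := sect_translate₂ t g (y₂ + c) y₂ v hg ((i : ℤ) • c)
        rw [add_comm y₂ ((i : ℤ) • c), trans]
        congr 1
        rw [add_smul, one_smul]
        abel
    | pred i ih =>
        have dec : (-(i : ℤ) - 1) • g = -g + (-(i : ℤ)) • g := by
          rw [sub_smul, one_smul]
          abel
        rw [dec, b.act_add, ih]
        have harg : y₂ + (-(i : ℤ)) • c = (-(i : ℤ) - 1) • c + (y₂ + c) := by
          rw [sub_smul, one_smul]
          abel
        rw [harg, sect_translate₂ t (-g) y₂ (y₂ + c) v Eneg ((-(i : ℤ) - 1) • c)]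
        congr 1
        abel
  have hmg : m • g = 0 := by
    have h1 := stage1 m
    rw [hmc, add_zero] at h1
    exact b.act_free T _ _ h1
  have pfW : ∀ j : ℤ, b.q T (b.act T (j • g) (t.s T (j • v) y₂)) = b.q T (t.s T v (y₂ + c)) := by
    intro j
    simp only [b.act_q, t.q_s]
    rw [smul_add, hmc, add_zero]
  have pfV : ∀ j : ℤ, b.q T (t.s T (j • v) (y₂ + c)) = b.q T (t.s T v (y₂ + c)) := by
    intro j
    simp only [t.q_s]
  have hW : ∀ j : ℤ, b.add₁ T (b.act T (j • g) (t.s T (j • v) y₂)) (t.s T v (y₂ + c)) (pfW j)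
      = b.act T ((j + 1) • g) (t.s T ((j + 1) • v) y₂) := by
    intro j
    calc b.add₁ T (b.act T (j • g) (t.s T (j • v) y₂)) (t.s T v (y₂ + c)) (pfW j)
        = b.add₁ T (b.act T (j • g) (t.s T (j • v) y₂)) (b.act T g (t.s T v y₂))
          (by simp only [b.act_q, t.q_s]) := add₁_congr rfl hg.symm _ _
      _ = b.act T (j • g) (b.add₁ T (t.s T (j • v) y₂) (b.act T g (t.s T v y₂))
          (by simp only [b.act_q, t.q_s])) := (act_add₁_left _ _ _ _ _).symm
      _ = b.act T (j • g) (b.act T g (b.add₁ T (t.s T (j • v) y₂) (t.s T v y₂)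
          (by simp only [t.q_s]))) := congrArg _ (act_add₁_right _ _ _ _ _).symm
      _ = b.act T (j • g + g) (b.add₁ T (t.s T (j • v) y₂) (t.s T v y₂)
          (by simp only [t.q_s])) := (b.act_add T _ _ _).symm
      _ = b.act T ((j + 1) • g) (t.s T ((j + 1) • v) y₂) := by
          rw [add_smul, one_smul, add_smul, one_smul]
          exact congrArg _ (t.add_left T _ _ y₂ _).symm
  have hV : ∀ j : ℤ, b.add₁ T (t.s T (j • v) (y₂ + c)) (t.s T v (y₂ + c)) (pfV j)
      = t.s T ((j + 1) • v) (y₂ + c) := by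
    intro j
    rw [add_smul, one_smul]
    exact (t.add_left T _ _ (y₂ + c) _).symm
  have stage2 : ∀ j : ℤ, b.act T (j • g) (t.s T (j • v) y₂) = t.s T (j • v) (y₂ + c) := by
    intro j
    induction j using Int.induction_on with
    | zero =>
        simp only [zero_smul, b.act_zero]
        exact zero_row t y₂ (y₂ + c) (by rw [smul_add, hmc, add_zero])
    | succ i ih =>
        exact (hW i).symm.trans ((add₁_congr ih rfl (pfW i) (pfV i)).trans (hV i))
    | pred i ih =>
        have h1 := hW (-(i : ℤ) - 1)
        have h2 := hV (-(i : ℤ) - 1)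
        have e : (-(i : ℤ) - 1) + 1 = -(i : ℤ) := by ring
        rw [e] at h1 h2
        exact cancel₁ (h1.trans (ih.trans h2.symm))
  have final := stage2 m
  rw [hmg, b.act_zero] at final
  rw [final]
  congr 1
  rw [hc]
  abel

/-- The key local computation: two sections of the pulled-back trivialization with the
same multiples agree provided suitable divisions exist. -/
lemma local_eq {T} (x₁ x₂ : P.obj T) (y₁ y₂ : Q.obj T)
    (hx : n • x₁ = n • x₂) (hy : m • y₁ = m • y₂)
    (u : Q.obj T) (hu : y₁ = n • u) (v : P.obj T) (hv : x₂ = m • v) :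
    t.s T x₁ y₁ = t.s T x₂ y₂ := by
  have e1 : t.s T x₁ y₁ = t.s T x₂ y₁ := by
    rw [hu]
    exact slot1 t x₁ x₂ u hx
  have e2 : t.s T x₂ y₁ = t.s T x₂ y₂ := by
    rw [hv]
    exact slot2 t y₁ y₂ v hy
  exact e1.trans e2

end BiextAlgebra

section Glue

variable {S : Scheme.{u}}

lemma hom_zsmul {M N : AddCommGrpCat.{u}} (f : M ⟶ N) (k : ℤ) (x : M) :
    f (k • x) = k • f x :=
  AddMonoidHom.map_zsmul f.hom k x

/-- The sieve of maps along which both coordinates admit divisions. -/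
def liftSieve (P' Q' : (Over S)ᵒᵖ ⥤ AddCommGrpCat.{u}) (n m : ℤ) (T : Over S)
    (x : P'.obj (op T)) (y : Q'.obj (op T)) : Sieve T where
  arrows Z f := ∃ x' y', n • x' = P'.map f.op x ∧ m • y' = Q'.map f.op y
  downward_closed := by
    rintro Z W f ⟨x', y', hx', hy'⟩ g
    refine ⟨P'.map g.op x', Q'.map g.op y', ?_, ?_⟩
    · calc n • P'.map g.op x' = P'.map g.op (n • x') := (hom_zsmul (P'.map g.op) _ _).symm
      _ = P'.map g.op (P'.map f.op x) := by rw [hx']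
      _ = P'.map (g ≫ f).op x := by rw [op_comp, P'.map_comp]; rfl
    · calc m • Q'.map g.op y' = Q'.map g.op (m • y') := (hom_zsmul (Q'.map g.op) _ _).symm
      _ = Q'.map g.op (Q'.map f.op y) := by rw [hy']
      _ = Q'.map (g ≫ f).op y := by rw [op_comp, Q'.map_comp]; rfl

lemma map_comp_apply' {F : (Over S)ᵒᵖ ⥤ AddCommGrpCat.{u}} {T Z W : Over S} (f : Z ⟶ T)
    (g : W ⟶ Z) (x : F.obj (op T)) : F.map (g ≫ f).op x = F.map g.op (F.map f.op x) := by
  rw [op_comp, F.map_comp]; rfl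

lemma liftSieve_coverIn {P' Q' : (Over S)ᵒᵖ ⥤ AddCommGrpCat.{u}}
    (hP' : IsDivisible P') (hQ' : IsDivisible Q') {n m : ℤ} (hn : n ≠ 0) (hm : m ≠ 0)
    (T : Over S) (x : P'.obj (op T)) (y : Q'.obj (op T)) :
    CoverIn (liftSieve P' Q' n m T x y) := by
  obtain ⟨R₁, hR₁, hd₁⟩ := hP' n hn T x
  apply coverIn_bind _ R₁ hR₁
  intro Z f hf
  obtain ⟨x', hx'⟩ := hd₁ f hf
  obtain ⟨R₂, hR₂, hd₂⟩ := hQ' m hm Z (Q'.map f.op y)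
  refine ⟨R₂, hR₂, ?_⟩
  intro W k hk
  obtain ⟨y', hy'⟩ := hd₂ k hk
  refine ⟨P'.map k.op x', y', ?_, hy'.trans (map_comp_apply' f k y).symm⟩
  calc n • P'.map k.op x' = P'.map k.op (n • x') := (hom_zsmul (P'.map k.op) _ _).symm
  _ = P'.map k.op (P'.map f.op x) := by rw [hx']
  _ = P'.map (k ≫ f).op x := (map_comp_apply' f k x).symm

variable {P Q G : CommGroupScheme S}
variable {b : Biextension S P.P Q.P G.P} {n m : ℤ}
variable (t : Biextension.MulTrivialization n m b)

/-- The key uniqueness: local sections with the same multiples agree. -/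
lemma keyUnique (hP : IsDivisible P.P) (hQ : IsDivisible Q.P) (hn : n ≠ 0) (hm : m ≠ 0)
    (Z : Over S) (x₁ x₂ : P.P.obj (op Z)) (y₁ y₂ : Q.P.obj (op Z))
    (hx : n • x₁ = n • x₂) (hy : m • y₁ = m • y₂) :
    t.s (op Z) x₁ y₁ = t.s (op Z) x₂ y₂ := by
  have hmem := (liftSieve_coverIn hQ hP hn hm Z y₁ x₂).mem_fppf
  have hsf := ((isSheaf_iff_isSheaf_of_type _ _).mp b.isSheaf) _ hmem
  apply hsf.isSeparatedFor.ext
  intro W g hg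
  obtain ⟨u, v, hu, hv⟩ := hg
  rw [t.natural, t.natural]
  refine local_eq t _ _ _ _ ?_ ?_ u hu.symm v hv.symm
  · rw [← hom_zsmul (P.P.map g.op), ← hom_zsmul (P.P.map g.op), hx]
  · rw [← hom_zsmul (Q.P.map g.op), ← hom_zsmul (Q.P.map g.op), hy]

/-- The family of local candidate sections over the lift sieve. -/
noncomputable def fam (T : Over S) (x : P.P.obj (op T)) (y : Q.P.obj (op T)) :
    Presieve.FamilyOfElements b.B (liftSieve P.P Q.P n m T x y).arrows :=
  fun _ _ hg => t.s _ hg.choose hg.choose_spec.choose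

lemma fam_eq (hP : IsDivisible P.P) (hQ : IsDivisible Q.P) (hn : n ≠ 0) (hm : m ≠ 0)
    {T : Over S} {x : P.P.obj (op T)} {y : Q.P.obj (op T)} {W : Over S}
    (g : W ⟶ T) (hg : (liftSieve P.P Q.P n m T x y).arrows g)
    (x' : P.P.obj (op W)) (y' : Q.P.obj (op W))
    (hx' : n • x' = P.P.map g.op x) (hy' : m • y' = Q.P.map g.op y) :
    fam t T x y g hg = t.s (op W) x' y' := by
  apply keyUnique t hP hQ hn hm
  · exact hg.choose_spec.choose_spec.1.trans hx'.symm
  · exact hg.choose_spec.choose_spec.2.trans hy'.symm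

lemma fam_compatible (hP : IsDivisible P.P) (hQ : IsDivisible Q.P) (hn : n ≠ 0) (hm : m ≠ 0)
    (T : Over S) (x : P.P.obj (op T)) (y : Q.P.obj (op T)) :
    (fam t T x y).Compatible := by
  intro Y₁ Y₂ Zc g₁ g₂ f₁ f₂ h₁ h₂ hcomm
  show b.B.map g₁.op (t.s _ _ _) = b.B.map g₂.op (t.s _ _ _)
  rw [t.natural, t.natural]
  apply keyUnique t hP hQ hn hm
  · rw [← hom_zsmul (P.P.map g₁.op), ← hom_zsmul (P.P.map g₂.op),
      h₁.choose_spec.choose_spec.1, h₂.choose_spec.choose_spec.1,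
      ← map_comp_apply' f₁ g₁ x, ← map_comp_apply' f₂ g₂ x, hcomm]
  · rw [← hom_zsmul (Q.P.map g₁.op), ← hom_zsmul (Q.P.map g₂.op),
      h₁.choose_spec.choose_spec.2, h₂.choose_spec.choose_spec.2,
      ← map_comp_apply' f₁ g₁ y, ← map_comp_apply' f₂ g₂ y, hcomm]

lemma liftSieve_isSheafFor (hP : IsDivisible P.P) (hQ : IsDivisible Q.P)
    (hn : n ≠ 0) (hm : m ≠ 0) (T : Over S) (x : P.P.obj (op T)) (y : Q.P.obj (op T)) :
    Presieve.IsSheafFor b.B (liftSieve P.P Q.P n m T x y).arrows :=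
  ((isSheaf_iff_isSheaf_of_type _ _).mp b.isSheaf) _
    (liftSieve_coverIn hP hQ hn hm T x y).mem_fppf

/-- The glued global section over `(x, y)`. -/
noncomputable def sglue (hP : IsDivisible P.P) (hQ : IsDivisible Q.P) (hn : n ≠ 0) (hm : m ≠ 0)
    (T : Over S) (x : P.P.obj (op T)) (y : Q.P.obj (op T)) :
    b.B.obj (op T) :=
  (liftSieve_isSheafFor hP hQ hn hm T x y).amalgamate
    (fam t T x y) (fam_compatible t hP hQ hn hm T x y)

lemma sglue_restrict (hP : IsDivisible P.P) (hQ : IsDivisible Q.P) (hn : n ≠ 0) (hm : m ≠ 0)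
    {T : Over S} {x : P.P.obj (op T)} {y : Q.P.obj (op T)} {W : Over S}
    (g : W ⟶ T) (hg : (liftSieve P.P Q.P n m T x y).arrows g)
    (x' : P.P.obj (op W)) (y' : Q.P.obj (op W))
    (hx' : n • x' = P.P.map g.op x) (hy' : m • y' = Q.P.map g.op y) :
    b.B.map g.op (sglue t hP hQ hn hm T x y) = t.s (op W) x' y' :=
  ((liftSieve_isSheafFor hP hQ hn hm T x y).valid_glue
    (fam_compatible t hP hQ hn hm T x y) g hg).trans
    (fam_eq t hP hQ hn hm g hg x' y' hx' hy')

end Glue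

/-- Let `P`, `Q`, `G` be commutative `S`-group schemes with `P` and `Q`
divisible. For all nonzero integers `n`, `m`, the endomorphism of `Biext¹(P, Q; G)`
sending a biextension `B` to its pull-back `(n × m)^* B` along multiplication by `n` on
`P` and by `m` on `Q` has trivial kernel: if `(n × m)^* B` is trivial then so is `B`. -/
theorem biextension_pullback_mul_kernel_trivial
    (S : Scheme.{u}) (P Q G : CommGroupScheme S)
    (hP : IsDivisible P.P) (hQ : IsDivisible Q.P)
    (n m : ℤ) (hn : n ≠ 0) (hm : m ≠ 0)
    (b : Biextension S P.P Q.P G.P)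
    (h : Nonempty (Biextension.MulTrivialization n m b)) :
    b.IsTrivial := by
  classical
  obtain ⟨t⟩ := h
  have hsh : Presieve.IsSheaf (fppfTopology S) b.B :=
    (isSheaf_iff_isSheaf_of_type _ _).mp b.isSheaf
  have hom_add : ∀ {M N : AddCommGrpCat.{u}} (f : M ⟶ N) (x y : M), f (x + y) = f x + f y :=
    fun f x y => AddMonoidHom.map_add f.hom x y
  refine ⟨{ s := fun T x y => sglue t hP hQ hn hm T.unop x y,
            natural := ?_, p_s := ?_, q_s := ?_, add_left := ?_, add_right := ?_ }⟩
  · -- natural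
    intro T T' f x y
    show b.B.map f (sglue t hP hQ hn hm T.unop x y)
        = sglue t hP hQ hn hm T'.unop (P.P.map f x) (Q.P.map f y)
    have hmem : (liftSieve P.P Q.P n m T.unop x y).pullback f.unop ∈ fppfTopology S T'.unop :=
      (fppfTopology S).pullback_stable f.unop
        (liftSieve_coverIn hP hQ hn hm T.unop x y).mem_fppf
    apply ((hsh _ hmem).isSeparatedFor).ext
    intro W g hg
    obtain ⟨x', y', hx', hy'⟩ := hg
    have L : b.B.map g.op (b.B.map f (sglue t hP hQ hn hm T.unop x y))
        = t.s (op W) x' y' := by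
      have e := sglue_restrict t hP hQ hn hm (g ≫ f.unop) ⟨x', y', hx', hy'⟩ x' y' hx' hy'
      rw [← e]
      exact (FunctorToTypes.map_comp_apply b.B f g.op _).symm
    have R : b.B.map g.op (sglue t hP hQ hn hm T'.unop (P.P.map f x) (Q.P.map f y))
        = t.s (op W) x' y' :=
      sglue_restrict t hP hQ hn hm g
        ⟨x', y', hx'.trans (map_comp_apply' f.unop g x), hy'.trans (map_comp_apply' f.unop g y)⟩
        x' y' (hx'.trans (map_comp_apply' f.unop g x)) (hy'.trans (map_comp_apply' f.unop g y))
    exact L.trans R.symm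
  · -- p_s
    intro T x y
    obtain ⟨R, hR, hle⟩ := liftSieve_coverIn hP hQ hn hm T.unop x y
    apply repSep P.repr _ _ R hR
    intro Z f hf
    obtain ⟨x', y', hx', hy'⟩ := hle f hf
    have hres := sglue_restrict t hP hQ hn hm f (hle f hf) x' y' hx' hy'
    calc P.P.map f.op (b.p T (sglue t hP hQ hn hm T.unop x y))
        = b.p (op Z) (b.B.map f.op (sglue t hP hQ hn hm T.unop x y)) :=
          (b.p_natural f.op _).symm
      _ = b.p (op Z) (t.s (op Z) x' y') := by rw [hres]
      _ = n • x' := t.p_s _ _ _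
      _ = P.P.map f.op x := hx'
  · -- q_s
    intro T x y
    obtain ⟨R, hR, hle⟩ := liftSieve_coverIn hP hQ hn hm T.unop x y
    apply repSep Q.repr _ _ R hR
    intro Z f hf
    obtain ⟨x', y', hx', hy'⟩ := hle f hf
    have hres := sglue_restrict t hP hQ hn hm f (hle f hf) x' y' hx' hy'
    calc Q.P.map f.op (b.q T (sglue t hP hQ hn hm T.unop x y))
        = b.q (op Z) (b.B.map f.op (sglue t hP hQ hn hm T.unop x y)) :=
          (b.q_natural f.op _).symm
      _ = b.q (op Z) (t.s (op Z) x' y') := by rw [hres]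
      _ = m • y' := t.q_s _ _ _
      _ = Q.P.map f.op y := hy'
  · -- add_left
    intro T x x' y hq
    have hmem := (fppfTopology S).intersection_covering
      (liftSieve_coverIn hP hQ hn hm T.unop x y).mem_fppf
      (liftSieve_coverIn hP hQ hn hm T.unop x' y).mem_fppf
    apply ((hsh _ hmem).isSeparatedFor).ext
    intro W g hg
    obtain ⟨hg1, hg2⟩ := hg
    obtain ⟨a, c, ha, hc⟩ := hg1
    obtain ⟨a', c', ha', hc'⟩ := hg2
    have hgsum : (liftSieve P.P Q.P n m T.unop (x + x') y).arrows g := by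
      refine ⟨a + a', c, ?_, hc⟩
      rw [smul_add, ha, ha', ← hom_add]
    have L := sglue_restrict t hP hQ hn hm g hgsum (a + a') c
      (by rw [smul_add, ha, ha', ← hom_add]) hc
    have key' : t.s (op W) a' c' = t.s (op W) a' c :=
      keyUnique t hP hQ hn hm W a' a' c' c rfl (hc'.trans hc.symm)
    have R1 : b.B.map g.op (b.add₁ T (sglue t hP hQ hn hm T.unop x y)
          (sglue t hP hQ hn hm T.unop x' y) hq)
        = b.add₁ (op W) (b.B.map g.op (sglue t hP hQ hn hm T.unop x y))
          (b.B.map g.op (sglue t hP hQ hn hm T.unop x' y))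
          (by rw [b.q_natural, b.q_natural, hq]) :=
      b.add₁_natural g.op _ _ hq _
    have R2 := add₁_congr (b := b)
      (sglue_restrict t hP hQ hn hm g ⟨a, c, ha, hc⟩ a c ha hc)
      ((sglue_restrict t hP hQ hn hm g ⟨a', c', ha', hc'⟩ a' c' ha' hc').trans key')
      (by rw [b.q_natural, b.q_natural, hq]) (by simp only [t.q_s])
    have R3 : b.add₁ (op W) (t.s (op W) a c) (t.s (op W) a' c)
        (by simp only [t.q_s]) = t.s (op W) (a + a') c :=
      (t.add_left (op W) a a' c _).symm
    exact L.trans (R1.trans (R2.trans R3)).symm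
  · -- add_right
    intro T x y y' hp
    have hmem := (fppfTopology S).intersection_covering
      (liftSieve_coverIn hP hQ hn hm T.unop x y).mem_fppf
      (liftSieve_coverIn hP hQ hn hm T.unop x y').mem_fppf
    apply ((hsh _ hmem).isSeparatedFor).ext
    intro W g hg
    obtain ⟨hg1, hg2⟩ := hg
    obtain ⟨a, c, ha, hc⟩ := hg1
    obtain ⟨a', c', ha', hc'⟩ := hg2
    have hgsum : (liftSieve P.P Q.P n m T.unop x (y + y')).arrows g := by
      refine ⟨a, c + c', ha, ?_⟩
      rw [smul_add, hc, hc', ← hom_add]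
    have L := sglue_restrict t hP hQ hn hm g hgsum a (c + c') ha
      (by rw [smul_add, hc, hc', ← hom_add])
    have key' : t.s (op W) a' c' = t.s (op W) a c' :=
      keyUnique t hP hQ hn hm W a' a c' c' (ha'.trans ha.symm) rfl
    have R1 : b.B.map g.op (b.add₂ T (sglue t hP hQ hn hm T.unop x y)
          (sglue t hP hQ hn hm T.unop x y') hp)
        = b.add₂ (op W) (b.B.map g.op (sglue t hP hQ hn hm T.unop x y))
          (b.B.map g.op (sglue t hP hQ hn hm T.unop x y'))
          (by rw [b.p_natural, b.p_natural, hp]) :=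
      b.add₂_natural g.op _ _ hp _
    have R2 := add₂_congr (b := b)
      (sglue_restrict t hP hQ hn hm g ⟨a, c, ha, hc⟩ a c ha hc)
      ((sglue_restrict t hP hQ hn hm g ⟨a', c', ha', hc'⟩ a' c' ha' hc').trans key')
      (by rw [b.p_natural, b.p_natural, hp]) (by simp only [t.p_s])
    have R3 : b.add₂ (op W) (t.s (op W) a c) (t.s (op W) a c')
        (by simp only [t.p_s]) = t.s (op W) a (c + c') :=
      (t.add_right (op W) a c c' _).symm
    exact L.trans (R1.trans (R2.trans R3)).symm


end FormalPaper
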